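/- For every integer k, the function x ↦ log |sin x / (1 + cos x + sin x)| tends to 0 as x tends to (2k+1)π within the punctured neighborhood of (2k+1)π (i.e., Tendsto (fun x => Real.log |sin x / (1 + cos x + sin x)|) (𝓝[≠] ((2k+1)·π)) (𝓝 0)). -/

import Mathlib

open Filter Topology in
theorem stmt18 (k : ℤ) :
    Tendsto (fun x : ℝ => Real.log |Real.sin x / (1 + Real.cos x + Real.sin x)|)
      (𝓝[≠] ((2 * (k : ℝ) + 1) * Real.pi)) (𝓝 0) := by
  set p : ℝ := (2 * (k : ℝ) + 1) * Real.pi with hp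
  -- Step 1: the ratio equals sin(x/2)/(sin(x/2)+cos(x/2)) near p, x ≠ p
  have hball : ∀ᶠ x in 𝓝[≠] p, dist x p < Real.pi := by
    apply eventually_nhdsWithin_of_eventually_nhds
    exact Metric.eventually_nhds_iff.2 ⟨Real.pi, Real.pi_pos, fun {y} h => h⟩
  have hne : ∀ᶠ x in 𝓝[≠] p, x ≠ p := eventually_mem_nhdsWithin
  have heq : ∀ᶠ x in 𝓝[≠] p,
      Real.sin x / (1 + Real.cos x + Real.sin x)
        = Real.sin (x / 2) / (Real.sin (x / 2) + Real.cos (x / 2)) := by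
    filter_upwards [hball, hne] with x hx hxne
    have hc : Real.cos (x / 2) ≠ 0 := by
      intro h
      rcases Real.cos_eq_zero_iff.1 h with ⟨n, hn⟩
      have hxn : x = (2 * (n : ℝ) + 1) * Real.pi := by
        field_simp at hn; linarith
      have hnk : n ≠ k := by
        intro h'; apply hxne; rw [hxn, h']
      have : dist x p = |2 * ((n : ℝ) - k)| * Real.pi := by
        rw [Real.dist_eq, hxn, hp, ← sub_mul, abs_mul, abs_of_pos Real.pi_pos]
        ring_nf
      have h2 : (1 : ℝ) ≤ |(n : ℝ) - k| := by
        have : ((1 : ℤ) : ℝ) ≤ |((n - k : ℤ) : ℝ)| := by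
          rw [← Int.cast_abs]
          exact_mod_cast Int.one_le_abs (sub_ne_zero.2 hnk)
        simpa using this
      have : (2 : ℝ) * Real.pi ≤ dist x p := by
        rw [this, abs_mul, abs_two]
        have := Real.pi_pos
        nlinarith
      linarith [Real.pi_pos]
    have hs : Real.sin x = 2 * Real.sin (x / 2) * Real.cos (x / 2) := by
      rw [← Real.sin_two_mul]; ring_nf
    have hcc : 1 + Real.cos x + Real.sin x
        = 2 * Real.cos (x / 2) * (Real.cos (x / 2) + Real.sin (x / 2)) := by
      have h1 : Real.cos x = 2 * Real.cos (x / 2) ^ 2 - 1 := by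
        rw [← Real.cos_two_mul]; ring_nf
      rw [h1, hs]; ring
    rw [hcc, hs]
    rw [show 2 * Real.sin (x / 2) * Real.cos (x / 2)
        = (2 * Real.cos (x / 2)) * Real.sin (x / 2) by ring,
      show 2 * Real.cos (x / 2) * (Real.cos (x / 2) + Real.sin (x / 2))
        = (2 * Real.cos (x / 2)) * (Real.sin (x / 2) + Real.cos (x / 2)) by ring]
    exact mul_div_mul_left _ _ (mul_ne_zero two_ne_zero hc)
  -- Step 2: the simplified ratio tends to 1 at p
  have hcp : Real.cos (p / 2) = 0 := by
    have : p / 2 = (k : ℝ) * Real.pi + Real.pi / 2 := by rw [hp]; ring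
    rw [this, Real.cos_add, Real.sin_int_mul_pi, Real.cos_pi_div_two,
      Real.sin_pi_div_two]
    ring
  have hsne : Real.sin (p / 2) ≠ 0 := by
    intro h
    have h2 := Real.sin_sq_add_cos_sq (p / 2)
    rw [h, hcp] at h2
    norm_num at h2
  have hden : Real.sin (p / 2) + Real.cos (p / 2) ≠ 0 := by
    rw [hcp, add_zero]; exact hsne
  have hlim : Tendsto (fun x : ℝ => Real.sin (x / 2) / (Real.sin (x / 2) + Real.cos (x / 2)))
      (𝓝 p) (𝓝 1) := by
    have hc1 : ContinuousAt (fun x : ℝ => Real.sin (x / 2)) p := by fun_prop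
    have hc2 : ContinuousAt (fun x : ℝ => Real.sin (x / 2) + Real.cos (x / 2)) p := by
      fun_prop
    have := (hc1.div hc2 hden)
    have hval : Real.sin (p / 2) / (Real.sin (p / 2) + Real.cos (p / 2)) = 1 := by
      rw [hcp, add_zero, div_self hsne]
    simpa [ContinuousAt, hval, Pi.div_def] using this
  have hlim' : Tendsto (fun x : ℝ => Real.sin x / (1 + Real.cos x + Real.sin x))
      (𝓝[≠] p) (𝓝 1) :=
    Tendsto.congr' (heq.mono fun x hx => hx.symm)
      (hlim.mono_left nhdsWithin_le_nhds)
  -- Step 3: compose with continuity of log |·| at 1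
  have hlog : ContinuousAt (fun y : ℝ => Real.log |y|) 1 := by
    have : ContinuousAt Real.log |(1 : ℝ)| := Real.continuousAt_log (by norm_num)
    exact this.comp (continuous_abs.continuousAt)
  have := hlog.tendsto.comp hlim'
  simpa [Function.comp_def] using this
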